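/- For any fixed k ≥ 3 and any ℓ ≥ 1, one has r_ℓ^(k) = (f_{ℓ−1}^(k−1) + d_ℓ^(k)) / 2. -/

import Mathlib

/-!
Binary strings are modeled as `List Bool`, with `true` = 1 and `false` = 0.
-/

/-- A string `v` is bifix-free if no nonempty proper prefix of `v` equals a
(proper) suffix of `v`. -/
def BifixFree (v : List Bool) : Prop :=
  ∀ p : List Bool, p ≠ [] → p ≠ v → p <+: v → ¬ p <:+ v

/-- The set `V_n^(k)`: binary strings of length `n` starting with `k` ones,
ending with `k` zeros, whose middle factor `v_{k+1} … v_{n-k}` begins with 0,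
ends with 1, and contains neither `k` consecutive 0's nor `k` consecutive 1's. -/
def Vnk (n k : ℕ) : Set (List Bool) :=
  {v | v.length = n ∧
    List.replicate k true <+: v ∧
    List.replicate k false <:+ v ∧
    ((v.drop k).take (n - 2 * k)).head? = some false ∧
    ((v.drop k).take (n - 2 * k)).getLast? = some true ∧
    ¬ List.replicate k false <:+: ((v.drop k).take (n - 2 * k)) ∧
    ¬ List.replicate k true <:+: ((v.drop k).take (n - 2 * k))}

/-- `𝒱^(k) = ⋃_{i ≥ 2k+2} V_i^(k)`. -/
def VkSet (k : ℕ) : Set (List Bool) := ⋃ i ∈ {i : ℕ | 2 * k + 2 ≤ i}, Vnk i k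

/-- `𝒱^(k)(n)`: elements of `𝒱^(k)` of length at most `n`. -/
def VkLe (k n : ℕ) : Set (List Bool) := {v ∈ VkSet k | v.length ≤ n}

/-- The set of binary strings of length `ℓ` that begin with 0, end with 1, and
contain neither `k` consecutive 0's nor `k` consecutive 1's. -/
def Rset (k ℓ : ℕ) : Set (List Bool) :=
  {w | w.length = ℓ ∧ w.head? = some false ∧ w.getLast? = some true ∧
    ¬ List.replicate k false <:+: w ∧ ¬ List.replicate k true <:+: w}

/-- `r_ℓ^(k)`, with the convention `r_0^(k) = 1`. -/
noncomputable def r (k ℓ : ℕ) : ℕ := if ℓ = 0 then 1 else (Rset k ℓ).ncard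

/-- Shifted `k`-generalized Fibonacci numbers: `f_ℓ^(k) = 2^ℓ` for `ℓ ≤ k-1`, and
`f_ℓ^(k) = ∑_{i=1}^{k} f_{ℓ-i}^(k)` for `ℓ ≥ k`. -/
def f (k : ℕ) : ℕ → ℕ
  | ℓ =>
    if h : ℓ < k then 2 ^ ℓ
    else ∑ i ∈ (Finset.range k).attach, f k (ℓ - (i.1 + 1))
termination_by ℓ => ℓ
decreasing_by
  have hi := i.2
  simp only [Finset.mem_range] at hi
  omega

/-- `S^(k)(n) = ∑_{ℓ=0}^{n} f_ℓ^(k)`. -/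
def S (k n : ℕ) : ℕ := ∑ ℓ ∈ Finset.range (n + 1), f k ℓ

/-- `d_ℓ^(k)`: 1 if `ℓ ≡ 0 (mod k)`, -1 if `ℓ ≡ 1 (mod k)`, 0 otherwise. -/
def d (k ℓ : ℕ) : ℤ := if ℓ % k = 0 then 1 else if ℓ % k = 1 then -1 else 0

/-- A set of binary strings is a cross-fix-free code if every element is
bifix-free and, for any two distinct elements `v, v'`, no nonempty prefix of
`v` (including `v` itself) is a suffix of `v'`, and vice versa. -/
def CrossFixFree (X : Set (List Bool)) : Prop :=
  (∀ v ∈ X, BifixFree v) ∧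
  ∀ v ∈ X, ∀ v' ∈ X, v ≠ v' → ∀ p : List Bool, p ≠ [] → p <+: v → ¬ p <:+ v'

/-- A strong cross-fix-free code: cross-fix-free and no codeword is a factor of
another. -/
def StrongCrossFixFree (X : Set (List Bool)) : Prop :=
  CrossFixFree X ∧ ∀ v ∈ X, ∀ v' ∈ X, v ≠ v' → ¬ v <:+: v'

/-- A Dyck word: equal numbers of 1's and 0's, and every prefix has at least as
many 1's as 0's. -/
def IsDyck (w : List Bool) : Prop :=
  w.count true = w.count false ∧ ∀ p : List Bool, p <+: w → p.count false ≤ p.count true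

/-- `𝒟 = { 1α0 : α a Dyck word }`. -/
def Dset : Set (List Bool) := {v | ∃ α : List Bool, IsDyck α ∧ v = true :: (α ++ [false])}

/-- `𝒟(n)`: elements of `𝒟` of length at most `n`. -/
def DLe (n : ℕ) : Set (List Bool) := {v ∈ Dset | v.length ≤ n}


section Stmt6Aux
open List


lemma take_drop_infix (l : List Bool) (i n : ℕ) : (l.drop i).take n <:+: l :=
  List.infix_iff_prefix_suffix.mpr ⟨l.drop i, take_prefix _ _, drop_suffix _ _⟩

lemma replicate_infix_append {k : ℕ} {c : Bool} {u v : List Bool}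
    (h : List.replicate k c <:+: u ++ v) :
    List.replicate k c <:+: u ∨ List.replicate k c <:+: v ∨
      ∃ m n, m + n = k ∧ 0 < m ∧ 0 < n ∧
        List.replicate m c <:+ u ∧ List.replicate n c <+: v := by
  obtain ⟨s, t, hw⟩ := h
  set i := s.length with hi
  have hd : u.drop i ++ v.drop (i - u.length) = replicate k c ++ t := by
    rw [← drop_append, ← hw, append_assoc, drop_left]
  rcases le_or_gt (i + k) u.length with hA | hA'
  · -- entirely inside u
    left
    have h1 : (u.drop i).take k = replicate k c := by
      have : i - u.length = 0 := by omega
      rw [this, drop_zero] at hd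
      calc (u.drop i).take k = (u.drop i ++ v).take k := by
            rw [take_append_of_le_length (by simp; omega)]
        _ = replicate k c := by rw [hd, take_append_of_le_length (by simp), take_replicate]
                                simp
    rw [← h1]; exact take_drop_infix u i k
  rcases le_or_gt u.length i with hB | hB'
  · -- entirely inside v
    right; left
    have hu0 : u.drop i = [] := drop_eq_nil_of_le hB
    rw [hu0, nil_append] at hd
    have h1 : (v.drop (i - u.length)).take k = replicate k c := by
      rw [hd, take_append_of_le_length (by simp), take_replicate]; simp
    rw [← h1]; exact take_drop_infix v _ k
  · -- crossing
    right; right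
    have : i - u.length = 0 := by omega
    rw [this, drop_zero] at hd
    set m := u.length - i with hm
    have hmk : m ≤ k := by omega
    have hum : (u.drop i).length = m := by simp [hm]
    have hsu : u.drop i = replicate m c := by
      calc u.drop i = (u.drop i ++ v).take m := by rw [take_append_of_le_length (by omega)]
                                                   rw [take_of_length_le (by omega)]
        _ = replicate m c := by
            rw [hd, take_append, take_replicate, min_eq_left hmk]
            have : m - (replicate k c).length = 0 := by simp; omega
            rw [this, take_zero, append_nil]
    have hv : v = replicate (k - m) c ++ t := by
      have := congrArg (List.drop m) hd
      rwa [drop_append, hum, drop_eq_nil_of_le (le_of_eq hum),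
        Nat.sub_self, drop_zero, nil_append, drop_append, drop_replicate,
        length_replicate, show m - k = 0 by omega, drop_zero] at this
    refine ⟨m, k - m, by omega, by omega, by omega, ?_, ?_⟩
    · rw [← hsu]; exact drop_suffix _ _
    · rw [hv]; exact prefix_append _ _

lemma not_infix_append {k j : ℕ} {b c : Bool} {u : List Bool}
    (hu : ¬ List.replicate k c <:+: u) (hlast : u.getLast? = some (!b)) (hj : j < k) :
    ¬ List.replicate k c <:+: u ++ List.replicate j b := by
  intro h
  rcases replicate_infix_append h with h | h | ⟨m, n, hmn, hm, hn, hs, hp⟩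
  · exact hu h
  · obtain ⟨n', hn', he⟩ := sublist_replicate_iff.1 h.sublist
    have := congrArg List.length he
    simp at this
    omega
  · -- suffix of u gives c = !b
    obtain ⟨w, hw⟩ := hs
    have h1 : u.getLast? = some c := by
      rw [← hw, getLast?_append, getLast?_replicate]
      simp [Nat.pos_iff_ne_zero.1 hm]
    -- prefix of replicate gives c = b
    obtain ⟨n', hn', he⟩ := sublist_replicate_iff.1 hp.sublist
    have hcb : c = b := by
      have hmem : c ∈ replicate n' b := by
        rw [← he]; exact mem_replicate.2 ⟨Nat.pos_iff_ne_zero.1 hn, rfl⟩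
      exact eq_of_mem_replicate hmem
    rw [hlast] at h1
    simp [hcb] at h1

-- trailing run length
lemma trailing_run {b : Bool} {u : List Bool} {j : ℕ} (hu : u.getLast? = some (!b)) :
    (((u ++ List.replicate j b).reverse).takeWhile (· == b)).length = j := by
  rw [reverse_append, reverse_replicate, takeWhile_append_of_pos (by
    intro a ha; rw [eq_of_mem_replicate ha]; simp)]
  have h1 : u.reverse.head? = some (!b) := by simp [hu]
  obtain ⟨t, ht⟩ := head?_eq_some_iff.1 h1
  rw [ht, takeWhile_cons]
  simp

def strs : ℕ → Finset (List Bool)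
  | 0 => {[]}
  | n + 1 => ((strs n).image (false :: ·)) ∪ ((strs n).image (true :: ·))

lemma mem_strs : ∀ {n : ℕ} {w : List Bool}, w ∈ strs n ↔ w.length = n := by
  intro n
  induction n with
  | zero => intro w; simp [strs, List.length_eq_zero_iff]
  | succ n ih =>
    intro w
    cases w with
    | nil => simp [strs, ih]
    | cons a t =>
      constructor
      · intro h
        rcases a <;> simp only [strs, Finset.mem_union, Finset.mem_image] at h <;>
          rcases h with ⟨x, hx, he⟩ | ⟨x, hx, he⟩ <;>
          simp_all [@ih]
      · intro h
        rcases a <;> simp only [strs, Finset.mem_union, Finset.mem_image]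
        · exact Or.inl ⟨t, ih.2 (by simpa using h), rfl⟩
        · exact Or.inr ⟨t, ih.2 (by simpa using h), rfl⟩

def Pk (k : ℕ) (b : Bool) (w : List Bool) : Prop :=
  w.head? = some false ∧ w.getLast? = some b ∧
    ¬ List.replicate k false <:+: w ∧ ¬ List.replicate k true <:+: w

instance (k : ℕ) (b : Bool) : DecidablePred (Pk k b) := fun w => by
  unfold Pk; infer_instance

def EF (k : ℕ) (b : Bool) (ℓ : ℕ) : Finset (List Bool) := (strs ℓ).filter (Pk k b)

lemma mem_EF {k : ℕ} {b : Bool} {ℓ : ℕ} {w : List Bool} :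
    w ∈ EF k b ℓ ↔ w.length = ℓ ∧ Pk k b w := by
  simp [EF, Finset.mem_filter, mem_strs]

lemma EF_zero (k : ℕ) (b : Bool) : EF k b 0 = ∅ := by
  ext w
  simp only [mem_EF, Finset.notMem_empty, iff_false, not_and]
  intro hw
  rw [List.length_eq_zero_iff] at hw
  subst hw
  rintro ⟨h, -⟩
  simp at h

lemma Pk_norun {k : ℕ} {b : Bool} {w : List Bool} (h : Pk k b w) (c : Bool) :
    ¬ List.replicate k c <:+: w := by
  cases c
  · exact h.2.2.1
  · exact h.2.2.2

lemma head?_append_left {α : Type*} {u v : List α} (h : u ≠ []) : (u ++ v).head? = u.head? := by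
  rw [List.head?_append, List.head?_eq_head h, Option.some_or]

lemma EF_decomp (k : ℕ) (hk : 2 ≤ k) (b : Bool) (ℓ : ℕ) (hℓ : 1 ≤ ℓ) :
    EF k b ℓ =
      ((Finset.Icc 1 (k - 1)).biUnion fun j =>
        (EF k (!b) (ℓ - j)).image (· ++ List.replicate j b)) ∪
      (if b = false ∧ ℓ ≤ k - 1 then ({List.replicate ℓ false} : Finset (List Bool)) else ∅) := by
  ext w
  simp only [Finset.mem_union, Finset.mem_biUnion, Finset.mem_image, Finset.mem_Icc]
  constructor
  · rintro hwEF
    obtain ⟨hlen, hhead, hlast, hrun⟩ := mem_EF.1 hwEF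
    have hnorun : ∀ c, ¬ List.replicate k c <:+: w := by
      intro c; cases c
      · exact hrun.1
      · exact hrun.2
    set j := (w.reverse.takeWhile (· == b)).length with hj
    have htw : w.reverse.takeWhile (· == b) = List.replicate j b := by
      apply List.eq_replicate_of_mem
      intro a ha
      have := List.mem_takeWhile_imp ha
      simpa using this
    have hw : w = (w.reverse.dropWhile (· == b)).reverse ++ List.replicate j b := by
      conv_lhs => rw [← w.reverse_reverse, ← List.takeWhile_append_dropWhile (p := (· == b)) (l := w.reverse)]
      rw [List.reverse_append, htw, List.reverse_replicate]
    set u := (w.reverse.dropWhile (· == b)).reverse with hu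
    have hj1 : 1 ≤ j := by
      have h1 : w.reverse.head? = some b := by simp [hlast]
      obtain ⟨t, ht⟩ := List.head?_eq_some_iff.1 h1
      rw [hj, ht, List.takeWhile_cons]
      simp
    by_cases hun : u = []
    · -- w is all b's
      right
      rw [hun, List.nil_append] at hw
      have hjl : j = ℓ := by rw [← hlen, hw]; simp
      have hbf : b = false := by
        rw [hw, List.head?_replicate, if_neg (by omega : ¬ j = 0)] at hhead
        exact Option.some_inj.mp hhead
      have hlk : ℓ ≤ k - 1 := by
        by_contra hcon
        apply hnorun b
        rw [hw, hjl]
        have : List.replicate ℓ b = List.replicate k b ++ List.replicate (ℓ - k) b := by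
          rw [← List.replicate_add]; congr 1; omega
        rw [this]
        exact (List.prefix_append _ _).isInfix
      rw [if_pos ⟨hbf, hlk⟩]
      simp [hw, hjl, hbf]
    · -- u nonempty
      left
      have hulast : u.getLast? = some (!b) := by
        have hdn : w.reverse.dropWhile (· == b) ≠ [] := by
          intro hcon; rw [hu, hcon] at hun; exact hun rfl
        have hh := List.head_dropWhile_not (· == b) (l := w.reverse) hdn
        rw [hu, List.getLast?_reverse, List.head?_eq_head hdn]
        simp only [beq_eq_false_iff_ne, ne_eq] at hh
        exact congrArg some (Bool.eq_not_of_ne hh)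
      have hjk : j ≤ k - 1 := by
        by_contra hcon
        apply hnorun b
        have h1 : List.replicate k b <:+ List.replicate j b := by
          have : List.replicate j b = List.replicate (j - k) b ++ List.replicate k b := by
            rw [← List.replicate_add]; congr 1; omega
          rw [this]; exact List.suffix_append _ _
        have h2 : List.replicate j b <:+ w := by rw [hw]; exact List.suffix_append _ _
        exact (h1.trans h2).isInfix
      refine ⟨j, ⟨hj1, hjk⟩, u, ?_, hw.symm⟩
      rw [mem_EF]
      have hulen : u.length = ℓ - j := by
        have := congrArg List.length hw
        simp at this
        omega
      refine ⟨hulen, ?_, hulast, ?_, ?_⟩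
      · rw [hw, head?_append_left hun] at hhead
        exact hhead
      · intro hcon
        exact hrun.1 (hcon.trans (by rw [hw]; exact (List.prefix_append _ _).isInfix))
      · intro hcon
        exact hrun.2 (hcon.trans (by rw [hw]; exact (List.prefix_append _ _).isInfix))
  · rintro (⟨j, ⟨hj1, hjk⟩, u, huEF, rfl⟩ | hsp)
    · obtain ⟨hulen, hhead, hulast, hrun⟩ := mem_EF.1 huEF
      have hune : u ≠ [] := by
        intro hcon; rw [hcon] at hhead; simp at hhead
      have hul1 : 1 ≤ u.length := List.length_pos_iff.2 hune
      rw [mem_EF]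
      refine ⟨?_, ?_, ?_, ?_, ?_⟩
      · simp [hulen]; omega
      · rw [head?_append_left hune]
        exact hhead
      · rw [List.getLast?_append, List.getLast?_replicate]
        simp [show j ≠ 0 by omega]
      · exact not_infix_append hrun.1 (by simpa using hulast) (by omega)
      · exact not_infix_append hrun.2 (by simpa using hulast) (by omega)
    · by_cases hcond : b = false ∧ ℓ ≤ k - 1
      · rw [if_pos hcond] at hsp
        simp only [Finset.mem_singleton] at hsp
        subst hsp
        obtain ⟨rfl, hlk⟩ := hcond
        rw [mem_EF]
        refine ⟨by simp, ?_, ?_, ?_, ?_⟩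
        · rw [List.head?_replicate]; simp [show ℓ ≠ 0 by omega]
        · rw [List.getLast?_replicate]; simp [show ℓ ≠ 0 by omega]
        · intro hcon
          obtain ⟨n', hn', he⟩ := List.sublist_replicate_iff.1 hcon.sublist
          have := congrArg List.length he
          simp at this
          omega
        · intro hcon
          obtain ⟨n', hn', he⟩ := List.sublist_replicate_iff.1 hcon.sublist
          have hk0 : k ≠ 0 := by omega
          have hmem : true ∈ List.replicate n' false := by
            rw [← he]; exact List.mem_replicate.2 ⟨hk0, rfl⟩
          exact absurd (List.eq_of_mem_replicate hmem) (by simp)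
      · rw [if_neg hcond] at hsp
        simp at hsp


lemma EF_card (k : ℕ) (hk : 2 ≤ k) (b : Bool) (ℓ : ℕ) (hℓ : 1 ≤ ℓ) :
    (EF k b ℓ).card = (∑ j ∈ Finset.Icc 1 (k - 1), (EF k (!b) (ℓ - j)).card) +
      (if b = false ∧ ℓ ≤ k - 1 then 1 else 0) := by
  have hpair : ∀ j₁ ∈ Finset.Icc 1 (k - 1), ∀ j₂ ∈ Finset.Icc 1 (k - 1), j₁ ≠ j₂ →
      Disjoint ((EF k (!b) (ℓ - j₁)).image (· ++ List.replicate j₁ b))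
        ((EF k (!b) (ℓ - j₂)).image (· ++ List.replicate j₂ b)) := by
    intro j₁ _ j₂ _ hne
    rw [Finset.disjoint_left]
    rintro w hw1 hw2
    simp only [Finset.mem_image] at hw1 hw2
    obtain ⟨u₁, hu₁, rfl⟩ := hw1
    obtain ⟨u₂, hu₂, he⟩ := hw2
    have h₁ := trailing_run (b := b) (j := j₁) (mem_EF.1 hu₁).2.2.1
    have h₂ := trailing_run (b := b) (j := j₂) (mem_EF.1 hu₂).2.2.1
    rw [he] at h₂
    exact hne (h₁.symm.trans h₂)
  have hdisj : Disjoint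
      ((Finset.Icc 1 (k - 1)).biUnion fun j =>
        (EF k (!b) (ℓ - j)).image (· ++ List.replicate j b))
      (if b = false ∧ ℓ ≤ k - 1 then ({List.replicate ℓ false} : Finset (List Bool)) else ∅) := by
    split
    · rename_i hc
      rw [Finset.disjoint_right]
      rintro w hw hbi
      simp only [Finset.mem_singleton] at hw
      subst hw
      simp only [Finset.mem_biUnion, Finset.mem_image] at hbi
      obtain ⟨j, -, u, hu, he⟩ := hbi
      obtain ⟨hulen, huhead, hulast, -⟩ := mem_EF.1 hu
      have hune : u ≠ [] := by intro hcon; rw [hcon] at huhead; simp at huhead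
      have hpre : u <+: List.replicate ℓ false := ⟨_, he⟩
      obtain ⟨n', -, rfl⟩ := List.sublist_replicate_iff.1 hpre.sublist
      rw [List.getLast?_replicate] at hulast
      by_cases hn0 : n' = 0
      · subst hn0; exact hune rfl
      · rw [if_neg hn0] at hulast
        rw [hc.1] at hulast
        simp at hulast
    · simp
  rw [EF_decomp k hk b ℓ hℓ, Finset.card_union_of_disjoint hdisj, Finset.card_biUnion hpair]
  congr 1
  · apply Finset.sum_congr rfl
    intro j _
    rw [Finset.card_image_of_injective _ (List.append_left_injective _)]
  · split <;> simp

lemma Icc_sum_eq (G : ℕ → ℤ) (m : ℕ) :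
    ∑ j ∈ Finset.Icc 1 m, G j = ∑ i ∈ Finset.range m, G (i + 1) := by
  rw [← Finset.Ico_add_one_right_eq_Icc, Finset.sum_Ico_eq_sum_range]
  exact Finset.sum_congr (by norm_num) (fun i _ => by rw [add_comm])

lemma sum_trunc (g : ℕ → ℤ) (h0 : g 0 = 0) {m ℓ : ℕ} (h1 : 1 ≤ ℓ) (h2 : ℓ - 1 ≤ m) :
    ∑ j ∈ Finset.Icc 1 m, g (ℓ - j) = ∑ j ∈ Finset.Icc 1 (ℓ - 1), g (ℓ - j) := by
  symm
  apply Finset.sum_subset (Finset.Icc_subset_Icc_right h2)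
  intro x hx hnx
  simp only [Finset.mem_Icc] at hx hnx
  have : ℓ - x = 0 := by omega
  rw [this, h0]

lemma d_window {k : ℕ} (hk : 2 ≤ k) (a : ℕ) : ∑ j ∈ Finset.range k, d k (a + j) = 0 := by
  induction a with
  | zero =>
    have h2 : ∑ j ∈ Finset.Ico 2 k, d k (0 + j) = 0 := by
      apply Finset.sum_eq_zero
      intro j hj
      simp only [Finset.mem_Ico] at hj
      simp only [zero_add, d, Nat.mod_eq_of_lt hj.2]
      rw [if_neg (by omega), if_neg (by omega)]
    rw [Finset.range_eq_Ico, ← Finset.sum_Ico_consecutive _ (by omega : 0 ≤ 2) (by omega : 2 ≤ k), h2]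
    have : Finset.Ico 0 2 = {0, 1} := by decide
    rw [this]
    simp [d, Nat.mod_eq_of_lt (by omega : 1 < k)]
  | succ a ih =>
    have hsucc := Finset.sum_range_succ (fun j => d k (a + j)) k
    have hsucc' := Finset.sum_range_succ' (fun j => d k (a + j)) k
    have hper : d k (a + k) = d k a := by simp [d, Nat.add_mod_right]
    simp only [Nat.add_zero] at hsucc'
    have hcg : ∑ j ∈ Finset.range k, d k (a + 1 + j) = ∑ j ∈ Finset.range k, d k (a + (j + 1)) :=
      Finset.sum_congr rfl (fun j _ => by rw [show a + 1 + j = a + (j + 1) by omega])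
    rw [hcg]
    linarith

lemma geom_two (n : ℕ) : ∑ i ∈ Finset.range n, (2 : ℤ) ^ i = 2 ^ n - 1 := by
  induction n with
  | zero => simp
  | succ n ih => rw [Finset.sum_range_succ, ih]; ring

lemma d_partial {k n : ℕ} (hk : 3 ≤ k) (h1 : 1 ≤ n) (h2 : n ≤ k - 2) :
    ∑ t ∈ Finset.Icc 1 n, d k t = -1 := by
  induction n with
  | zero => omega
  | succ n ih =>
    by_cases hn : n = 0
    · subst hn
      simp [d, Nat.mod_eq_of_lt (by omega : 1 < k)]
    · rw [Finset.sum_Icc_succ_top (by omega : 1 ≤ n + 1), ih (by omega) (by omega)]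
      have : d k (n + 1) = 0 := by
        simp only [d, Nat.mod_eq_of_lt (by omega : n + 1 < k)]
        rw [if_neg (by omega), if_neg (by omega)]
      rw [this, add_zero]

lemma d_shift {k ℓ : ℕ} (hk : 3 ≤ k) (hℓ : k ≤ ℓ) :
    d k ℓ = -∑ j ∈ Finset.Icc 1 (k - 1), d k (ℓ - j) := by
  have hw := d_window (by omega : 2 ≤ k) (ℓ - (k - 1))
  have hrefl := Finset.sum_range_reflect (fun j => d k (ℓ - (k - 1) + j)) k
  have hcg : ∑ j ∈ Finset.range k, d k (ℓ - (k - 1) + (k - 1 - j)) =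
      ∑ j ∈ Finset.range k, d k (ℓ - j) := by
    apply Finset.sum_congr rfl
    intro j hj
    simp only [Finset.mem_range] at hj
    congr 1
    omega
  have hfull : ∑ j ∈ Finset.range k, d k (ℓ - j) = 0 := by rw [← hcg, hrefl]; exact hw
  have hsplit : ∑ j ∈ Finset.range k, d k (ℓ - j) =
      d k ℓ + ∑ j ∈ Finset.Icc 1 (k - 1), d k (ℓ - j) := by
    rw [show Finset.range k = Finset.range ((k - 1) + 1) by congr 1; omega,
      Finset.sum_range_succ' (fun j => d k (ℓ - j)) (k - 1),
      Icc_sum_eq (fun j => d k (ℓ - j)) (k - 1)]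
    simp [add_comm]
  linarith



lemma f_small {m n : ℕ} (h : n < m) : f m n = 2 ^ n := by
  rw [f, dif_pos h]

lemma f_rec {m n : ℕ} (h : m ≤ n) : f m n = ∑ i ∈ Finset.range m, f m (n - (i + 1)) := by
  rw [f, dif_neg (by omega)]
  exact Finset.sum_attach (Finset.range m) (fun i => f m (n - (i + 1)))

lemma key (k : ℕ) (hk : 3 ≤ k) : ∀ ℓ : ℕ, 1 ≤ ℓ →
    ((EF k true ℓ).card : ℤ) + ((EF k false ℓ).card : ℤ) = (f (k - 1) (ℓ - 1) : ℤ) ∧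
    ((EF k true ℓ).card : ℤ) - ((EF k false ℓ).card : ℤ) = d k ℓ := by
  intro ℓ
  induction ℓ using Nat.strong_induction_on with
  | _ ℓ ih =>
    intro hℓ
    have hT : ((EF k true ℓ).card : ℤ) =
        ∑ j ∈ Finset.Icc 1 (k - 1), ((EF k false (ℓ - j)).card : ℤ) := by
      rw [EF_card k (by omega) true ℓ hℓ]
      push_cast
      simp
    have hF : ((EF k false ℓ).card : ℤ) =
        (∑ j ∈ Finset.Icc 1 (k - 1), ((EF k true (ℓ - j)).card : ℤ)) +
          (if ℓ ≤ k - 1 then 1 else 0) := by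
      rw [EF_card k (by omega) false ℓ hℓ]
      push_cast
      simp
    rcases le_or_gt k ℓ with hkl | hkl
    · -- ℓ ≥ k
      have hmem : ∀ j ∈ Finset.Icc 1 (k - 1), ℓ - j < ℓ ∧ 1 ≤ ℓ - j := by
        intro j hj
        simp only [Finset.mem_Icc] at hj
        omega
      have e1 : ∑ j ∈ Finset.Icc 1 (k - 1),
            (((EF k true (ℓ - j)).card : ℤ) + ((EF k false (ℓ - j)).card : ℤ)) =
          ∑ j ∈ Finset.Icc 1 (k - 1), (f (k - 1) (ℓ - j - 1) : ℤ) :=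
        Finset.sum_congr rfl fun j hj =>
          (ih (ℓ - j) (hmem j hj).1 (hmem j hj).2).1
      have e2 : ∑ j ∈ Finset.Icc 1 (k - 1),
            (((EF k true (ℓ - j)).card : ℤ) - ((EF k false (ℓ - j)).card : ℤ)) =
          ∑ j ∈ Finset.Icc 1 (k - 1), d k (ℓ - j) :=
        Finset.sum_congr rfl fun j hj =>
          (ih (ℓ - j) (hmem j hj).1 (hmem j hj).2).2
      have hf : ∑ j ∈ Finset.Icc 1 (k - 1), (f (k - 1) (ℓ - j - 1) : ℤ) =
          (f (k - 1) (ℓ - 1) : ℤ) := by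
        rw [Icc_sum_eq (fun j => (f (k - 1) (ℓ - j - 1) : ℤ)) (k - 1),
          f_rec (show k - 1 ≤ ℓ - 1 by omega)]
        push_cast
        apply Finset.sum_congr rfl
        intro i _
        have he : ℓ - (i + 1) - 1 = ℓ - 1 - (i + 1) := by omega
        rw [he]
      have hd2 := d_shift hk hkl
      have hs1 := Finset.sum_add_distrib (s := Finset.Icc 1 (k - 1))
        (f := fun j => ((EF k true (ℓ - j)).card : ℤ))
        (g := fun j => ((EF k false (ℓ - j)).card : ℤ))
      have hs2 := Finset.sum_sub_distrib (s := Finset.Icc 1 (k - 1))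
        (f := fun j => ((EF k true (ℓ - j)).card : ℤ))
        (g := fun j => ((EF k false (ℓ - j)).card : ℤ))
      rw [if_neg (by omega : ¬ ℓ ≤ k - 1), add_zero] at hF
      constructor
      · rw [hT, hF]
        linarith [e1, hf, hs1]
      · rw [hT, hF, hd2]
        linarith [e2, hs2]
    · -- ℓ < k
      rw [if_pos (by omega : ℓ ≤ k - 1)] at hF
      have t1 : ∑ j ∈ Finset.Icc 1 (k - 1), ((EF k false (ℓ - j)).card : ℤ) =
          ∑ j ∈ Finset.Icc 1 (ℓ - 1), ((EF k false (ℓ - j)).card : ℤ) :=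
        sum_trunc (fun n => ((EF k false n).card : ℤ)) (by simp [EF_zero]) hℓ (by omega)
      have t2 : ∑ j ∈ Finset.Icc 1 (k - 1), ((EF k true (ℓ - j)).card : ℤ) =
          ∑ j ∈ Finset.Icc 1 (ℓ - 1), ((EF k true (ℓ - j)).card : ℤ) :=
        sum_trunc (fun n => ((EF k true n).card : ℤ)) (by simp [EF_zero]) hℓ (by omega)
      rw [t1] at hT
      rw [t2] at hF
      have hmem : ∀ j ∈ Finset.Icc 1 (ℓ - 1), ℓ - j < ℓ ∧ 1 ≤ ℓ - j := by
        intro j hj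
        simp only [Finset.mem_Icc] at hj
        omega
      have e1 : ∑ j ∈ Finset.Icc 1 (ℓ - 1),
            (((EF k true (ℓ - j)).card : ℤ) + ((EF k false (ℓ - j)).card : ℤ)) =
          ∑ j ∈ Finset.Icc 1 (ℓ - 1), (f (k - 1) (ℓ - j - 1) : ℤ) :=
        Finset.sum_congr rfl fun j hj =>
          (ih (ℓ - j) (hmem j hj).1 (hmem j hj).2).1
      have e2 : ∑ j ∈ Finset.Icc 1 (ℓ - 1),
            (((EF k true (ℓ - j)).card : ℤ) - ((EF k false (ℓ - j)).card : ℤ)) =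
          ∑ j ∈ Finset.Icc 1 (ℓ - 1), d k (ℓ - j) :=
        Finset.sum_congr rfl fun j hj =>
          (ih (ℓ - j) (hmem j hj).1 (hmem j hj).2).2
      have hf : ∑ j ∈ Finset.Icc 1 (ℓ - 1), (f (k - 1) (ℓ - j - 1) : ℤ) =
          2 ^ (ℓ - 1) - 1 := by
        rw [Icc_sum_eq (fun j => (f (k - 1) (ℓ - j - 1) : ℤ)) (ℓ - 1)]
        have hterm : ∀ i ∈ Finset.range (ℓ - 1),
            (f (k - 1) (ℓ - (i + 1) - 1) : ℤ) = 2 ^ (ℓ - 1 - 1 - i) := by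
          intro i hi
          simp only [Finset.mem_range] at hi
          rw [f_small (by omega)]
          push_cast
          congr 1
          omega
        rw [Finset.sum_congr rfl hterm,
          Finset.sum_range_reflect (fun i => (2 : ℤ) ^ i) (ℓ - 1), geom_two]
      have hd3 : ∑ j ∈ Finset.Icc 1 (ℓ - 1), d k (ℓ - j) =
          ∑ t ∈ Finset.Icc 1 (ℓ - 1), d k t := by
        rw [Icc_sum_eq (fun j => d k (ℓ - j)) (ℓ - 1), Icc_sum_eq (fun t => d k t) (ℓ - 1)]
        have hterm : ∀ i ∈ Finset.range (ℓ - 1),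
            d k (ℓ - (i + 1)) = d k (ℓ - 1 - 1 - i + 1) := by
          intro i hi
          simp only [Finset.mem_range] at hi
          congr 1
          omega
        rw [Finset.sum_congr rfl hterm,
          Finset.sum_range_reflect (fun i => d k (i + 1)) (ℓ - 1)]
      have hfs : (f (k - 1) (ℓ - 1) : ℤ) = 2 ^ (ℓ - 1) := by
        rw [f_small (by omega)]
        push_cast
        rfl
      have hs1 := Finset.sum_add_distrib (s := Finset.Icc 1 (ℓ - 1))
        (f := fun j => ((EF k true (ℓ - j)).card : ℤ))
        (g := fun j => ((EF k false (ℓ - j)).card : ℤ))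
      have hs2 := Finset.sum_sub_distrib (s := Finset.Icc 1 (ℓ - 1))
        (f := fun j => ((EF k true (ℓ - j)).card : ℤ))
        (g := fun j => ((EF k false (ℓ - j)).card : ℤ))
      by_cases hl1 : ℓ = 1
      · subst hl1
        have hempty : Finset.Icc 1 (1 - 1) = (∅ : Finset ℕ) := by
          apply Finset.Icc_eq_empty
          omega
        rw [hempty, Finset.sum_empty] at hT hF
        constructor
        · rw [hT, hF, hfs]
          norm_num
        · rw [hT, hF]
          simp [d, Nat.mod_eq_of_lt (show 1 < k by omega)]
      · -- 2 ≤ ℓ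
        have hdp := d_partial hk (by omega : 1 ≤ ℓ - 1) (by omega : ℓ - 1 ≤ k - 2)
        have hdl : d k ℓ = 0 := by
          simp only [d, Nat.mod_eq_of_lt hkl]
          rw [if_neg (by omega), if_neg (by omega)]
        constructor
        · rw [hT, hF, hfs]
          linarith [e1, hf, hs1]
        · rw [hT, hF, hdl]
          linarith [e2, hs2, hd3, hdp]

end Stmt6Aux

/-- For any `k ≥ 3` and `ℓ ≥ 1`,
`r_ℓ^(k) = (f_{ℓ-1}^(k-1) + d_ℓ^(k)) / 2`. -/

theorem stmt_6 (k ℓ : ℕ) (hk : 3 ≤ k) (hℓ : 1 ≤ ℓ) :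
    (r k ℓ : ℚ) = ((f (k - 1) (ℓ - 1) : ℚ) + (d k ℓ : ℚ)) / 2 := by
  have hne : ℓ ≠ 0 := by omega
  have hR : Rset k ℓ = ↑(EF k true ℓ) := by
    ext w
    simp only [Rset, Set.mem_setOf_eq, Finset.mem_coe, mem_EF, Pk]
  have hr : (r k ℓ : ℤ) = ((EF k true ℓ).card : ℤ) := by
    rw [r, if_neg hne, hR, Set.ncard_coe_finset]
  obtain ⟨h1, h2⟩ := key k hk ℓ hℓ
  have h3 : 2 * (r k ℓ : ℤ) = (f (k - 1) (ℓ - 1) : ℤ) + d k ℓ := by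
    rw [hr]; linarith
  have h4 := congrArg (fun z : ℤ => (z : ℚ)) h3
  push_cast at h4
  linarith
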